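/- Let γ ∈ Π(μ,ν) for probability measures μ, ν on ℝⁿ with finite second moments, and let γ_ℓ denote the block approximation of γ at scale ℓ. Then the transport cost converges: ∫|x−y|² dγ_ℓ(x,y) → ∫|x−y|² dγ(x,y) as ℓ → 0⁺. -/

import Mathlib

open MeasureTheory ENNReal Filter Topology
noncomputable section

abbrev En (n : ℕ) : Type := EuclideanSpace ℝ (Fin n)

def IsCoupling {n : ℕ} (μ ν : Measure (En n)) (γ : Measure (En n × En n)) : Prop :=
  γ.map Prod.fst = μ ∧ γ.map Prod.snd = ν

def tCost {n : ℕ} (γ : Measure (En n × En n)) : ℝ≥0∞ :=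
  ∫⁻ p, (‖p.1 - p.2‖₊ : ℝ≥0∞) ^ 2 ∂γ

def W2sq {n : ℕ} (μ ν : Measure (En n)) : ℝ≥0∞ :=
  ⨅ (γ : Measure (En n × En n)) (_ : IsCoupling μ ν γ), tCost γ

def M2 {n : ℕ} (μ : Measure (En n)) : ℝ≥0∞ := ∫⁻ x, (‖x‖₊ : ℝ≥0∞) ^ 2 ∂μ

def dens {X : Type*} [MeasureSpace X] (μ : Measure X) (x : X) : ℝ :=
  (μ.rnDeriv volume x).toReal

def entIntegrand {X : Type*} [MeasureSpace X] (μ : Measure X) (x : X) : ℝ :=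
  dens μ x * Real.log (dens μ x)

def Hneg {X : Type*} [MeasureSpace X] (μ : Measure X) : ℝ≥0∞ :=
  ∫⁻ x, ENNReal.ofReal (-(entIntegrand μ x))

def Hpos {X : Type*} [MeasureSpace X] (μ : Measure X) : ℝ≥0∞ :=
  ∫⁻ x, ENNReal.ofReal (entIntegrand μ x)

open scoped Classical in
def entE {X : Type*} [MeasureSpace X] (μ : Measure X) : EReal :=
  if μ ≪ (volume : Measure X) then
    (if Hpos μ = ∞ then (⊤ : EReal) else ((Hpos μ).toReal : EReal) - ((Hneg μ : ℝ≥0∞) : EReal))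
  else ⊤

def W2epsE {n : ℕ} (ε : ℝ) (μ ν : Measure (En n)) : EReal :=
  ⨅ (γ : Measure (En n × En n)) (_ : IsCoupling μ ν γ),
    ((tCost γ : ℝ≥0∞) : EReal) + (ε : EReal) * entE γ

def cube {n : ℕ} (j : Fin n → ℤ) (ℓ : ℝ) : Set (En n) :=
  {x | ∀ i, (j i : ℝ) * ℓ ≤ x i ∧ x i < ((j i : ℝ) + 1) * ℓ}

def cellNormalize {n : ℕ} (μ : Measure (En n)) (S : Set (En n)) : Measure (En n) :=
  (μ S)⁻¹ • μ.restrict S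

def blockApprox {n : ℕ} (μ ν : Measure (En n)) (γ : Measure (En n × En n)) (ℓ : ℝ) :
    Measure (En n × En n) :=
  Measure.sum (fun jk : (Fin n → ℤ) × (Fin n → ℤ) =>
    γ (cube jk.1 ℓ ×ˢ cube jk.2 ℓ) •
      ((cellNormalize μ (cube jk.1 ℓ)).prod (cellNormalize ν (cube jk.2 ℓ))))

open scoped NNReal
set_option linter.unusedSectionVars false

lemma ofReal_norm_eq_coe_nnnorm {E : Type*} [SeminormedAddGroup E] (a : E) :
    ENNReal.ofReal ‖a‖ = (‖a‖₊ : ℝ≥0∞) := ENNReal.ofReal_eq_coe_nnreal _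


lemma mem_cube_iff {n : ℕ} {ℓ : ℝ} (hℓ : 0 < ℓ) (j : Fin n → ℤ) (x : En n) :
    x ∈ cube j ℓ ↔ ∀ i, ⌊x i / ℓ⌋ = j i := by
  unfold cube
  simp only [Set.mem_setOf_eq]
  refine forall_congr' fun i => ?_
  rw [Int.floor_eq_iff, le_div_iff₀ hℓ, div_lt_iff₀ hℓ]

lemma cube_measurable {n : ℕ} (j : Fin n → ℤ) (ℓ : ℝ) : MeasurableSet (cube j ℓ) := by
  have : cube j ℓ = ⋂ i, ((fun x : En n => x i) ⁻¹' Set.Ico ((j i : ℝ) * ℓ) (((j i : ℝ) + 1) * ℓ)) := by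
    ext x; simp [cube, Set.mem_Ico]
  rw [this]
  exact MeasurableSet.iInter fun i =>
    ((measurable_pi_apply i).comp (WithLp.measurable_ofLp 2 _) : Measurable fun x : En n => x i) measurableSet_Ico

lemma cube_disjoint {n : ℕ} {ℓ : ℝ} (hℓ : 0 < ℓ) :
    Pairwise (Function.onFun Disjoint fun j : Fin n → ℤ => cube j ℓ) := by
  intro j j' hne
  simp only [Function.onFun, Set.disjoint_left]
  intro x hx hx'
  apply hne
  funext i
  rw [← (mem_cube_iff hℓ j x).1 hx i, ← (mem_cube_iff hℓ j' x).1 hx' i]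

lemma cube_cover {n : ℕ} {ℓ : ℝ} (hℓ : 0 < ℓ) :
    ⋃ j : Fin n → ℤ, cube j ℓ = Set.univ := by
  ext x
  simp only [Set.mem_iUnion, Set.mem_univ, iff_true]
  exact ⟨fun i => ⌊x i / ℓ⌋, (mem_cube_iff hℓ _ x).2 fun i => rfl⟩

lemma norm_sub_le_of_mem_cube {n : ℕ} {ℓ : ℝ} (hℓ : 0 ≤ ℓ) {j : Fin n → ℤ} {x y : En n}
    (hx : x ∈ cube j ℓ) (hy : y ∈ cube j ℓ) : ‖x - y‖ ≤ Real.sqrt n * ℓ := by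
  have hsum : ∀ i, ‖(x - y) i‖ ^ 2 ≤ ℓ ^ 2 := by
    intro i
    have h1 := (hx i).1; have h2 := (hx i).2
    have h3 := (hy i).1; have h4 := (hy i).2
    have he : ((j i : ℝ) + 1) * ℓ = (j i : ℝ) * ℓ + ℓ := by ring
    have : |x i - y i| ≤ ℓ := by
      rw [abs_sub_le_iff]; constructor <;> linarith
    have hxy : (x - y) i = x i - y i := by simp
    rw [hxy, Real.norm_eq_abs]
    have hab := abs_nonneg (x i - y i)
    nlinarith
  rw [EuclideanSpace.norm_eq]
  have : ∑ i, ‖(x - y) i‖ ^ 2 ≤ (n : ℝ) * ℓ ^ 2 := by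
    calc ∑ i, ‖(x - y) i‖ ^ 2 ≤ ∑ _i : Fin n, ℓ ^ 2 := Finset.sum_le_sum fun i _ => hsum i
      _ = (n : ℝ) * ℓ ^ 2 := by simp [mul_comm]
  calc Real.sqrt (∑ i, ‖(x - y) i‖ ^ 2) ≤ Real.sqrt ((n : ℝ) * ℓ ^ 2) := Real.sqrt_le_sqrt this
    _ = Real.sqrt n * ℓ := by
        rw [Real.sqrt_mul (by positivity), Real.sqrt_sq hℓ]
lemma two_mul_le_one_add_sq (A : ℝ≥0∞) : 2 * A ≤ 1 + A ^ 2 := by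
  cases A with
  | top => simp
  | coe a =>
    have h : (2 * a : ℝ≥0) ≤ 1 + a ^ 2 := by
      rw [← NNReal.coe_le_coe]
      push_cast
      nlinarith [sq_nonneg ((a : ℝ) - 1)]
    exact_mod_cast h

lemma sq_max_bound (A B : ℝ≥0∞) : (A + B) ^ 2 ≤ 4 * A ^ 2 + 4 * B ^ 2 := by
  have h : A + B ≤ 2 * max A B := by
    calc A + B ≤ max A B + max A B := add_le_add (le_max_left _ _) (le_max_right _ _)
      _ = 2 * max A B := (two_mul _).symm
  calc (A + B) ^ 2 ≤ (2 * max A B) ^ 2 := by gcongr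
    _ = 4 * (max A B) ^ 2 := by ring
    _ ≤ 4 * A ^ 2 + 4 * B ^ 2 := by
        rcases max_cases A B with ⟨h1, _⟩ | ⟨h1, _⟩ <;> rw [h1]
        · exact le_add_right le_rfl
        · exact le_add_left le_rfl

def gfun {X : Type*} [NormedAddCommGroup X] (c : ℝ) (q : X × X) : ℝ≥0∞ :=
  (ENNReal.ofReal (‖q.1 - q.2‖ + c)) ^ 2

lemma gfun_le {X : Type*} [NormedAddCommGroup X] {c : ℝ} (hc : 0 ≤ c) (q : X × X) :
    gfun c q ≤ (1 + ENNReal.ofReal c) * (‖q.1 - q.2‖₊ : ℝ≥0∞) ^ 2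
      + (ENNReal.ofReal c + (ENNReal.ofReal c) ^ 2) := by
  set A : ℝ≥0∞ := (‖q.1 - q.2‖₊ : ℝ≥0∞)
  set C : ℝ≥0∞ := ENNReal.ofReal c
  have hA : ENNReal.ofReal ‖q.1 - q.2‖ = A := ofReal_norm_eq_coe_nnnorm _
  have h1 : gfun c q ≤ (A + C) ^ 2 := by
    unfold gfun
    gcongr
    rw [ENNReal.ofReal_add (norm_nonneg _) hc, hA]
  refine h1.trans ?_
  have h2 : (A + C) ^ 2 = A ^ 2 + C * (2 * A) + C ^ 2 := by ring
  rw [h2]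
  have h3 : C * (2 * A) ≤ C * (1 + A ^ 2) := by gcongr; exact two_mul_le_one_add_sq A
  calc A ^ 2 + C * (2 * A) + C ^ 2 ≤ A ^ 2 + C * (1 + A ^ 2) + C ^ 2 := by gcongr
    _ = (1 + C) * A ^ 2 + (C + C ^ 2) := by ring

lemma key_ineq {X : Type*} [MeasurableSpace X] (ρ σ : Measure X) {S : Set X}
    (hS : MeasurableSet S) {f g : X → ℝ≥0∞} (hg : Measurable g)
    (h : ∀ p ∈ S, ∀ q ∈ S, f p ≤ g q) :
    (∫⁻ p in S, f p ∂ρ) * σ S ≤ ρ S * ∫⁻ q in S, g q ∂σ := by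
  have h1 : ∀ q ∈ S, (∫⁻ p in S, f p ∂ρ) ≤ ρ S * g q := by
    intro q hq
    calc ∫⁻ p in S, f p ∂ρ ≤ ∫⁻ _p in S, g q ∂ρ :=
          setLIntegral_mono' hS fun p hp => h p hp q hq
      _ = g q * ρ S := by rw [setLIntegral_const]
      _ = ρ S * g q := mul_comm _ _
  calc (∫⁻ p in S, f p ∂ρ) * σ S = ∫⁻ _q in S, (∫⁻ p in S, f p ∂ρ) ∂σ := by
        rw [setLIntegral_const]
    _ ≤ ∫⁻ q in S, ρ S * g q ∂σ := setLIntegral_mono' hS h1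
    _ = ρ S * ∫⁻ q in S, g q ∂σ := lintegral_const_mul _ hg
-- new material
section Main
variable {n : ℕ}

lemma measurable_fE : Measurable fun p : En n × En n => (‖p.1 - p.2‖₊ : ℝ≥0∞) ^ 2 :=
  ((measurable_fst.sub measurable_snd).nnnorm.coe_nnreal_ennreal).pow_const 2

lemma measurable_gfun (c : ℝ) : Measurable (gfun (X := En n) c) :=
  (((measurable_fst.sub measurable_snd).norm.add_const c).ennreal_ofReal).pow_const 2

lemma f_le_gfun {ℓ : ℝ} (hℓ : 0 < ℓ) {j k : Fin n → ℤ} {p q : En n × En n}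
    (hp : p ∈ cube j ℓ ×ˢ cube k ℓ) (hq : q ∈ cube j ℓ ×ˢ cube k ℓ) :
    (‖p.1 - p.2‖₊ : ℝ≥0∞) ^ 2 ≤ gfun (2 * Real.sqrt n * ℓ) q := by
  have h1 : ‖p.1 - q.1‖ ≤ Real.sqrt n * ℓ := norm_sub_le_of_mem_cube hℓ.le hp.1 hq.1
  have h2 : ‖q.2 - p.2‖ ≤ Real.sqrt n * ℓ := norm_sub_le_of_mem_cube hℓ.le hq.2 hp.2
  have hnorm : ‖p.1 - p.2‖ ≤ ‖q.1 - q.2‖ + 2 * Real.sqrt n * ℓ := by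
    have heq : p.1 - p.2 = (p.1 - q.1) + (q.1 - q.2) + (q.2 - p.2) := by abel
    calc ‖p.1 - p.2‖ = ‖(p.1 - q.1) + (q.1 - q.2) + (q.2 - p.2)‖ := by rw [← heq]
      _ ≤ ‖(p.1 - q.1) + (q.1 - q.2)‖ + ‖q.2 - p.2‖ := norm_add_le _ _
      _ ≤ ‖p.1 - q.1‖ + ‖q.1 - q.2‖ + ‖q.2 - p.2‖ := by
          gcongr; exact norm_add_le _ _
      _ ≤ ‖q.1 - q.2‖ + 2 * Real.sqrt n * ℓ := by linarith
  have : (‖p.1 - p.2‖₊ : ℝ≥0∞) = ENNReal.ofReal ‖p.1 - p.2‖ :=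
    (ofReal_norm_eq_coe_nnnorm _).symm
  rw [this]
  unfold gfun
  gcongr

variable (μ ν : Measure (En n)) [IsProbabilityMeasure μ] [IsProbabilityMeasure ν]
  (γ : Measure (En n × En n)) (hγ : IsCoupling μ ν γ)

lemma gamma_univ (hγ : IsCoupling μ ν γ) : γ Set.univ = 1 := by
  have := hγ.1
  have h : γ.map Prod.fst Set.univ = μ Set.univ := by rw [this]
  rw [Measure.map_apply measurable_fst MeasurableSet.univ, Set.preimage_univ] at h
  rw [h, measure_univ]

lemma cellNormalize_univ (Q : Set (En n)) : cellNormalize μ Q Set.univ = (μ Q)⁻¹ * μ Q := by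
  simp [cellNormalize, Measure.restrict_apply_univ]

lemma cellNormalize_univ_le (Q : Set (En n)) : cellNormalize μ Q Set.univ ≤ 1 := by
  rw [cellNormalize_univ]
  rcases eq_or_ne (μ Q) 0 with h | h
  · simp [h]
  · rw [ENNReal.inv_mul_cancel h (measure_ne_top μ Q)]

instance cellNormalize_finite (S : Set (En n)) : IsFiniteMeasure (cellNormalize μ S) := by
  constructor
  rw [cellNormalize_univ]
  rcases eq_or_ne (μ S) 0 with h | h
  · simp [h]
  · rw [ENNReal.inv_mul_cancel h (measure_ne_top μ S)]
    exact one_lt_top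

lemma cellNormalize_self {Q : Set (En n)} (hQ : MeasurableSet Q) (h : μ Q ≠ 0) :
    cellNormalize μ Q Q = 1 := by
  simp only [cellNormalize, Measure.smul_apply, smul_eq_mul,
    Measure.restrict_apply hQ, Set.inter_self]
  exact ENNReal.inv_mul_cancel h (measure_ne_top μ Q)

lemma cellNormalize_univ_eq {Q : Set (En n)} (h : μ Q ≠ 0) :
    cellNormalize μ Q Set.univ = 1 := by
  rw [cellNormalize_univ]
  exact ENNReal.inv_mul_cancel h (measure_ne_top μ Q)

end Main

section Core
variable {n : ℕ} {μ ν : Measure (En n)} [IsProbabilityMeasure μ] [IsProbabilityMeasure ν]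
  {γ : Measure (En n × En n)} {ℓ : ℝ}

lemma S_measurable (jk : (Fin n → ℤ) × (Fin n → ℤ)) :
    MeasurableSet (cube jk.1 ℓ ×ˢ cube jk.2 ℓ) :=
  (cube_measurable _ _).prod (cube_measurable _ _)

lemma S_disjoint (hℓ : 0 < ℓ) :
    Pairwise (Function.onFun Disjoint fun jk : (Fin n → ℤ) × (Fin n → ℤ) => cube jk.1 ℓ ×ˢ cube jk.2 ℓ) := by
  intro jk jk' hne
  have h : jk.1 ≠ jk'.1 ∨ jk.2 ≠ jk'.2 := by
    by_contra h; push_neg at h; exact hne (Prod.ext h.1 h.2)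
  rcases h with h | h
  · exact Set.disjoint_left.2 fun p hp hp' =>
      Set.disjoint_left.1 (cube_disjoint hℓ h) hp.1 hp'.1
  · exact Set.disjoint_left.2 fun p hp hp' =>
      Set.disjoint_left.1 (cube_disjoint hℓ h) hp.2 hp'.2

lemma S_cover (hℓ : 0 < ℓ) :
    ⋃ jk : (Fin n → ℤ) × (Fin n → ℤ), cube jk.1 ℓ ×ˢ cube jk.2 ℓ = Set.univ := by
  ext p
  simp only [Set.mem_iUnion, Set.mem_univ, iff_true]
  have h1 : p.1 ∈ ⋃ j : Fin n → ℤ, cube j ℓ := by rw [cube_cover hℓ]; trivial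
  have h2 : p.2 ∈ ⋃ j : Fin n → ℤ, cube j ℓ := by rw [cube_cover hℓ]; trivial
  obtain ⟨j, hj⟩ := Set.mem_iUnion.1 h1
  obtain ⟨k, hk⟩ := Set.mem_iUnion.1 h2
  exact ⟨(j, k), hj, hk⟩

lemma mu_cube_ne_zero (hγ : IsCoupling μ ν γ) {jk : (Fin n → ℤ) × (Fin n → ℤ)}
    (h0 : γ (cube jk.1 ℓ ×ˢ cube jk.2 ℓ) ≠ 0) : μ (cube jk.1 ℓ) ≠ 0 := by
  intro hμ0
  apply h0
  have hle : γ (cube jk.1 ℓ ×ˢ cube jk.2 ℓ) ≤ γ (Prod.fst ⁻¹' cube jk.1 ℓ) :=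
    measure_mono fun p hp => hp.1
  have heq : γ (Prod.fst ⁻¹' cube jk.1 ℓ) = μ (cube jk.1 ℓ) := by
    rw [← hγ.1, Measure.map_apply measurable_fst (cube_measurable _ _)]
  exact le_antisymm (by rw [heq, hμ0] at hle; exact hle) (zero_le ..)

lemma nu_cube_ne_zero (hγ : IsCoupling μ ν γ) {jk : (Fin n → ℤ) × (Fin n → ℤ)}
    (h0 : γ (cube jk.1 ℓ ×ˢ cube jk.2 ℓ) ≠ 0) : ν (cube jk.2 ℓ) ≠ 0 := by
  intro hν0
  apply h0
  have hle : γ (cube jk.1 ℓ ×ˢ cube jk.2 ℓ) ≤ γ (Prod.snd ⁻¹' cube jk.2 ℓ) :=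
    measure_mono fun p hp => hp.2
  have heq : γ (Prod.snd ⁻¹' cube jk.2 ℓ) = ν (cube jk.2 ℓ) := by
    rw [← hγ.2, Measure.map_apply measurable_snd (cube_measurable _ _)]
  exact le_antisymm (by rw [heq, hν0] at hle; exact hle) (zero_le ..)

lemma pi_S_eq_one (hγ : IsCoupling μ ν γ) {jk : (Fin n → ℤ) × (Fin n → ℤ)}
    (h0 : γ (cube jk.1 ℓ ×ˢ cube jk.2 ℓ) ≠ 0) :
    (cellNormalize μ (cube jk.1 ℓ)).prod (cellNormalize ν (cube jk.2 ℓ))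
      (cube jk.1 ℓ ×ˢ cube jk.2 ℓ) = 1 := by
  rw [Measure.prod_prod, cellNormalize_self μ (cube_measurable _ _) (mu_cube_ne_zero hγ h0),
    cellNormalize_self ν (cube_measurable _ _) (nu_cube_ne_zero hγ h0), one_mul]

lemma pi_univ_le (jk : (Fin n → ℤ) × (Fin n → ℤ)) :
    (cellNormalize μ (cube jk.1 ℓ)).prod (cellNormalize ν (cube jk.2 ℓ)) Set.univ ≤ 1 := by
  rw [← Set.univ_prod_univ, Measure.prod_prod]
  exact mul_le_one' (cellNormalize_univ_le μ _) (cellNormalize_univ_le ν _)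

lemma pi_univ_eq_one (hγ : IsCoupling μ ν γ) {jk : (Fin n → ℤ) × (Fin n → ℤ)}
    (h0 : γ (cube jk.1 ℓ ×ˢ cube jk.2 ℓ) ≠ 0) :
    (cellNormalize μ (cube jk.1 ℓ)).prod (cellNormalize ν (cube jk.2 ℓ)) Set.univ = 1 := by
  rw [← Set.univ_prod_univ, Measure.prod_prod,
    cellNormalize_univ_eq μ (mu_cube_ne_zero hγ h0),
    cellNormalize_univ_eq ν (nu_cube_ne_zero hγ h0), one_mul]

lemma lintegral_pi_eq_setL (hγ : IsCoupling μ ν γ) {jk : (Fin n → ℤ) × (Fin n → ℤ)}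
    (h0 : γ (cube jk.1 ℓ ×ˢ cube jk.2 ℓ) ≠ 0) (f : En n × En n → ℝ≥0∞) :
    ∫⁻ p, f p ∂((cellNormalize μ (cube jk.1 ℓ)).prod (cellNormalize ν (cube jk.2 ℓ)))
      = ∫⁻ p in cube jk.1 ℓ ×ˢ cube jk.2 ℓ, f p
          ∂((cellNormalize μ (cube jk.1 ℓ)).prod (cellNormalize ν (cube jk.2 ℓ))) := by
  set π := (cellNormalize μ (cube jk.1 ℓ)).prod (cellNormalize ν (cube jk.2 ℓ))
  have hcompl : π (cube jk.1 ℓ ×ˢ cube jk.2 ℓ)ᶜ = 0 := by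
    have h1 := pi_S_eq_one hγ h0
    have h2 := pi_univ_eq_one hγ h0
    have := measure_compl (μ := π) (S_measurable jk) (by rw [h1]; exact one_ne_top)
    rw [h2, h1] at this
    simpa using this
  rw [← lintegral_add_compl f (S_measurable jk) (μ := π),
    setLIntegral_measure_zero _ _ hcompl, add_zero]

lemma blockApprox_univ_le (hγ : IsCoupling μ ν γ) (hℓ : 0 < ℓ) :
    blockApprox μ ν γ ℓ Set.univ ≤ 1 := by
  rw [blockApprox, Measure.sum_apply _ MeasurableSet.univ]
  calc ∑' jk : (Fin n → ℤ) × (Fin n → ℤ), (γ (cube jk.1 ℓ ×ˢ cube jk.2 ℓ) •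
        ((cellNormalize μ (cube jk.1 ℓ)).prod (cellNormalize ν (cube jk.2 ℓ)))) Set.univ
      ≤ ∑' jk : (Fin n → ℤ) × (Fin n → ℤ), γ (cube jk.1 ℓ ×ˢ cube jk.2 ℓ) := by
        refine ENNReal.tsum_le_tsum fun jk => ?_
        rw [Measure.smul_apply, smul_eq_mul]
        exact mul_le_of_le_one_right (zero_le ..) (pi_univ_le jk)
    _ = γ (⋃ jk : (Fin n → ℤ) × (Fin n → ℤ), cube jk.1 ℓ ×ˢ cube jk.2 ℓ) :=
        (measure_iUnion (S_disjoint hℓ) S_measurable).symm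
    _ = 1 := by rw [S_cover hℓ, gamma_univ μ ν γ hγ]

end Core

section Main2
variable {n : ℕ} {μ ν : Measure (En n)} [IsProbabilityMeasure μ] [IsProbabilityMeasure ν]
  {γ : Measure (En n × En n)} {ℓ : ℝ}

lemma measurable_fE1 : Measurable fun p : En n × En n => (‖p.1‖₊ : ℝ≥0∞) ^ 2 :=
  (measurable_fst.nnnorm.coe_nnreal_ennreal).pow_const 2

lemma measurable_fE2 : Measurable fun p : En n × En n => (‖p.2‖₊ : ℝ≥0∞) ^ 2 :=
  (measurable_snd.nnnorm.coe_nnreal_ennreal).pow_const 2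

lemma tCost_blockApprox_le (hγ : IsCoupling μ ν γ) (hℓ : 0 < ℓ) :
    tCost (blockApprox μ ν γ ℓ) ≤ ∫⁻ q, gfun (2 * Real.sqrt n * ℓ) q ∂γ := by
  set c := 2 * Real.sqrt n * ℓ with hc
  rw [tCost, blockApprox, lintegral_sum_measure]
  simp_rw [lintegral_smul_measure]
  have per : ∀ jk : (Fin n → ℤ) × (Fin n → ℤ),
      γ (cube jk.1 ℓ ×ˢ cube jk.2 ℓ) *
        ∫⁻ p, (‖p.1 - p.2‖₊ : ℝ≥0∞) ^ 2
          ∂((cellNormalize μ (cube jk.1 ℓ)).prod (cellNormalize ν (cube jk.2 ℓ)))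
      ≤ ∫⁻ q in cube jk.1 ℓ ×ˢ cube jk.2 ℓ, gfun c q ∂γ := by
    intro jk
    rcases eq_or_ne (γ (cube jk.1 ℓ ×ˢ cube jk.2 ℓ)) 0 with h0 | h0
    · rw [h0, zero_mul]; exact zero_le ..
    · rw [lintegral_pi_eq_setL hγ h0]
      have hk := key_ineq ((cellNormalize μ (cube jk.1 ℓ)).prod (cellNormalize ν (cube jk.2 ℓ)))
        γ (S_measurable jk) (measurable_gfun c) (fun p hp q hq => f_le_gfun hℓ hp hq)
      rw [pi_S_eq_one hγ h0, one_mul] at hk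
      rw [mul_comm]
      exact hk
  calc ∑' jk : (Fin n → ℤ) × (Fin n → ℤ), γ (cube jk.1 ℓ ×ˢ cube jk.2 ℓ) *
        ∫⁻ p, (‖p.1 - p.2‖₊ : ℝ≥0∞) ^ 2
          ∂((cellNormalize μ (cube jk.1 ℓ)).prod (cellNormalize ν (cube jk.2 ℓ)))
      ≤ ∑' jk : (Fin n → ℤ) × (Fin n → ℤ),
          ∫⁻ q in cube jk.1 ℓ ×ˢ cube jk.2 ℓ, gfun c q ∂γ := ENNReal.tsum_le_tsum per
    _ = ∫⁻ q in ⋃ jk : (Fin n → ℤ) × (Fin n → ℤ), cube jk.1 ℓ ×ˢ cube jk.2 ℓ, gfun c q ∂γ :=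
        (lintegral_iUnion S_measurable (S_disjoint hℓ) _).symm
    _ = ∫⁻ q, gfun c q ∂γ := by rw [S_cover hℓ, Measure.restrict_univ]

lemma tCost_le_lintegral_blockApprox (hγ : IsCoupling μ ν γ) (hℓ : 0 < ℓ) :
    tCost γ ≤ ∫⁻ q, gfun (2 * Real.sqrt n * ℓ) q ∂(blockApprox μ ν γ ℓ) := by
  set c := 2 * Real.sqrt n * ℓ with hc
  rw [blockApprox, lintegral_sum_measure]
  simp_rw [lintegral_smul_measure]
  have expand : tCost γ = ∑' jk : (Fin n → ℤ) × (Fin n → ℤ),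
      ∫⁻ p in cube jk.1 ℓ ×ˢ cube jk.2 ℓ, (‖p.1 - p.2‖₊ : ℝ≥0∞) ^ 2 ∂γ := by
    rw [tCost]
    have huniv : (∫⁻ p, (‖p.1 - p.2‖₊ : ℝ≥0∞) ^ 2 ∂γ)
        = ∫⁻ p in Set.univ, (‖p.1 - p.2‖₊ : ℝ≥0∞) ^ 2 ∂γ := by rw [Measure.restrict_univ]
    rw [huniv, ← S_cover hℓ, lintegral_iUnion S_measurable (S_disjoint hℓ)]
  rw [expand]
  refine ENNReal.tsum_le_tsum fun jk => ?_
  rcases eq_or_ne (γ (cube jk.1 ℓ ×ˢ cube jk.2 ℓ)) 0 with h0 | h0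
  · rw [setLIntegral_measure_zero _ _ h0]; exact zero_le ..
  · have hk := key_ineq γ
      ((cellNormalize μ (cube jk.1 ℓ)).prod (cellNormalize ν (cube jk.2 ℓ)))
      (S_measurable jk) (measurable_gfun c) (fun p hp q hq => f_le_gfun hℓ hp hq)
    rw [pi_S_eq_one hγ h0, mul_one] at hk
    exact hk.trans (mul_le_mul_right (setLIntegral_le_lintegral _ _) _)

lemma lintegral_gfun_le (σ : Measure (En n × En n)) {c : ℝ} (hc : 0 ≤ c) :
    ∫⁻ q, gfun c q ∂σ ≤ (1 + ENNReal.ofReal c) * tCost σ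
      + (ENNReal.ofReal c + (ENNReal.ofReal c) ^ 2) * σ Set.univ := by
  calc ∫⁻ q, gfun c q ∂σ
      ≤ ∫⁻ q, ((1 + ENNReal.ofReal c) * (‖q.1 - q.2‖₊ : ℝ≥0∞) ^ 2
          + (ENNReal.ofReal c + (ENNReal.ofReal c) ^ 2)) ∂σ :=
        lintegral_mono fun q => gfun_le hc q
    _ = (1 + ENNReal.ofReal c) * tCost σ
          + (ENNReal.ofReal c + (ENNReal.ofReal c) ^ 2) * σ Set.univ := by
        rw [lintegral_add_left (measurable_fE.const_mul _), lintegral_const_mul _ measurable_fE,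
          lintegral_const, tCost]

lemma tCost_ne_top (hμM : M2 μ ≠ ∞) (hνM : M2 ν ≠ ∞) (hγ : IsCoupling μ ν γ) :
    tCost γ ≠ ∞ := by
  have hb : ∀ p : En n × En n, (‖p.1 - p.2‖₊ : ℝ≥0∞) ^ 2
      ≤ 4 * (‖p.1‖₊ : ℝ≥0∞) ^ 2 + 4 * (‖p.2‖₊ : ℝ≥0∞) ^ 2 := by
    intro p
    have h1 : (‖p.1 - p.2‖₊ : ℝ≥0∞) ≤ (‖p.1‖₊ : ℝ≥0∞) + (‖p.2‖₊ : ℝ≥0∞) := by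
      rw [← ofReal_norm_eq_coe_nnnorm, ← ofReal_norm_eq_coe_nnnorm, ← ofReal_norm_eq_coe_nnnorm,
        ← ENNReal.ofReal_add (norm_nonneg _) (norm_nonneg _)]
      exact ENNReal.ofReal_le_ofReal (norm_sub_le _ _)
    calc (‖p.1 - p.2‖₊ : ℝ≥0∞) ^ 2 ≤ ((‖p.1‖₊ : ℝ≥0∞) + (‖p.2‖₊ : ℝ≥0∞)) ^ 2 := by gcongr
      _ ≤ 4 * (‖p.1‖₊ : ℝ≥0∞) ^ 2 + 4 * (‖p.2‖₊ : ℝ≥0∞) ^ 2 := sq_max_bound _ _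
  have hle : tCost γ ≤ 4 * M2 μ + 4 * M2 ν := by
    rw [tCost]
    calc ∫⁻ p, (‖p.1 - p.2‖₊ : ℝ≥0∞) ^ 2 ∂γ
        ≤ ∫⁻ p, (4 * (‖p.1‖₊ : ℝ≥0∞) ^ 2 + 4 * (‖p.2‖₊ : ℝ≥0∞) ^ 2) ∂γ := lintegral_mono hb
      _ = 4 * ∫⁻ p, (‖p.1‖₊ : ℝ≥0∞) ^ 2 ∂γ + 4 * ∫⁻ p, (‖p.2‖₊ : ℝ≥0∞) ^ 2 ∂γ := by
          rw [lintegral_add_left (measurable_fE1.const_mul _),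
            lintegral_const_mul _ measurable_fE1, lintegral_const_mul _ measurable_fE2]
      _ = 4 * M2 μ + 4 * M2 ν := by
          rw [M2, M2, ← hγ.1, ← hγ.2,
            lintegral_map ((measurable_nnnorm.coe_nnreal_ennreal).pow_const 2) measurable_fst,
            lintegral_map ((measurable_nnnorm.coe_nnreal_ennreal).pow_const 2) measurable_snd]
  exact ne_top_of_le_ne_top (by
    exact ENNReal.add_ne_top.2 ⟨ENNReal.mul_ne_top (by norm_num) hμM,
      ENNReal.mul_ne_top (by norm_num) hνM⟩) hle

end Main2

/-- the transport cost of the block approximation converges to the transport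
cost of `γ` as `ℓ → 0⁺`. -/
theorem stmt_9 {n : ℕ} (μ ν : Measure (En n))
    [IsProbabilityMeasure μ] [IsProbabilityMeasure ν]
    (hμM : M2 μ ≠ ∞) (hνM : M2 ν ≠ ∞)
    (γ : Measure (En n × En n)) (hγ : IsCoupling μ ν γ) :
    Tendsto (fun ℓ : ℝ => tCost (blockApprox μ ν γ ℓ)) (𝓝[>] (0:ℝ)) (𝓝 (tCost γ)) := by
  have hT : tCost γ ≠ ∞ := tCost_ne_top hμM hνM hγ
  set T := tCost γ with hTdef
  set C : ℝ → ℝ≥0∞ := fun ℓ => ENNReal.ofReal (2 * Real.sqrt n * ℓ) with hCdef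
  have hCt : Tendsto C (𝓝[>] (0:ℝ)) (𝓝 0) := by
    have h1 : Tendsto (fun ℓ : ℝ => 2 * Real.sqrt n * ℓ) (𝓝[>] (0:ℝ)) (𝓝 0) := by
      have h : Tendsto (fun ℓ : ℝ => 2 * Real.sqrt n * ℓ) (𝓝 (0:ℝ)) (𝓝 (2 * Real.sqrt n * 0)) :=
        (continuous_const.mul continuous_id).tendsto (0 : ℝ)
      simp only [mul_zero] at h
      exact h.mono_left nhdsWithin_le_nhds
    have h2 := (ENNReal.continuous_ofReal.tendsto 0).comp h1
    rw [ENNReal.ofReal_zero] at h2; exact h2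
  have hden : Tendsto (fun ℓ : ℝ => 1 + C ℓ) (𝓝[>] (0:ℝ)) (𝓝 1) := by
    have h : Tendsto (fun ℓ : ℝ => (1:ℝ≥0∞) + C ℓ) (𝓝[>] (0:ℝ)) (𝓝 (1 + 0)) :=
      Tendsto.add tendsto_const_nhds hCt
    simpa using h
  have hD : Tendsto (fun ℓ : ℝ => C ℓ + (C ℓ) ^ 2) (𝓝[>] (0:ℝ)) (𝓝 0) := by
    have hsq : Tendsto (fun ℓ : ℝ => (C ℓ) ^ 2) (𝓝[>] (0:ℝ)) (𝓝 0) := by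
      have := ((ENNReal.continuous_pow 2).tendsto 0).comp hCt
      simpa [Function.comp_def] using this
    have := hCt.add hsq
    simpa using this
  have hU : Tendsto (fun ℓ : ℝ => (1 + C ℓ) * T + (C ℓ + (C ℓ) ^ 2)) (𝓝[>] (0:ℝ)) (𝓝 T) := by
    have h2 := ENNReal.Tendsto.mul_const hden (Or.inl one_ne_zero) (b := T)
    have h3 := h2.add hD
    simpa using h3
  have hL : Tendsto (fun ℓ : ℝ => (T - (C ℓ + (C ℓ) ^ 2)) / (1 + C ℓ)) (𝓝[>] (0:ℝ)) (𝓝 T) := by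
    have hnum : Tendsto (fun ℓ : ℝ => T - (C ℓ + (C ℓ) ^ 2)) (𝓝[>] (0:ℝ)) (𝓝 (T - 0)) :=
      ENNReal.Tendsto.sub tendsto_const_nhds hD (Or.inl hT)
    have h := ENNReal.Tendsto.div hnum (Or.inr one_ne_zero) hden (Or.inl one_ne_top)
    simpa using h
  refine tendsto_of_tendsto_of_tendsto_of_le_of_le' hL hU ?_ ?_
  · filter_upwards [self_mem_nhdsWithin] with ℓ hℓ
    have hℓ' : (0:ℝ) < ℓ := hℓ
    have hc0 : (0:ℝ) ≤ 2 * Real.sqrt n * ℓ := by positivity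
    have key : T ≤ (1 + C ℓ) * tCost (blockApprox μ ν γ ℓ) + (C ℓ + (C ℓ) ^ 2) := by
      calc T ≤ ∫⁻ q, gfun (2 * Real.sqrt n * ℓ) q ∂(blockApprox μ ν γ ℓ) :=
            tCost_le_lintegral_blockApprox hγ hℓ'
        _ ≤ (1 + C ℓ) * tCost (blockApprox μ ν γ ℓ)
              + (C ℓ + (C ℓ) ^ 2) * (blockApprox μ ν γ ℓ) Set.univ :=
            lintegral_gfun_le _ hc0
        _ ≤ (1 + C ℓ) * tCost (blockApprox μ ν γ ℓ) + (C ℓ + (C ℓ) ^ 2) * 1 := by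
            gcongr
            exact blockApprox_univ_le hγ hℓ'
        _ = (1 + C ℓ) * tCost (blockApprox μ ν γ ℓ) + (C ℓ + (C ℓ) ^ 2) := by rw [mul_one]
    rw [ENNReal.div_le_iff_le_mul (Or.inl (by simp)) (Or.inl (ENNReal.add_ne_top.2 ⟨one_ne_top, ENNReal.ofReal_ne_top⟩))]
    rw [tsub_le_iff_right]
    calc T ≤ (1 + C ℓ) * tCost (blockApprox μ ν γ ℓ) + (C ℓ + (C ℓ) ^ 2) := key
      _ = tCost (blockApprox μ ν γ ℓ) * (1 + C ℓ) + (C ℓ + (C ℓ) ^ 2) := by rw [mul_comm]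
  · filter_upwards [self_mem_nhdsWithin] with ℓ hℓ
    have hℓ' : (0:ℝ) < ℓ := hℓ
    have hc0 : (0:ℝ) ≤ 2 * Real.sqrt n * ℓ := by positivity
    calc tCost (blockApprox μ ν γ ℓ)
        ≤ ∫⁻ q, gfun (2 * Real.sqrt n * ℓ) q ∂γ := tCost_blockApprox_le hγ hℓ'
      _ ≤ (1 + C ℓ) * T + (C ℓ + (C ℓ) ^ 2) * γ Set.univ := lintegral_gfun_le _ hc0
      _ = (1 + C ℓ) * T + (C ℓ + (C ℓ) ^ 2) := by rw [gamma_univ μ ν γ hγ, mul_one]
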